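/- Let C̄, R̄ ⊆ V with |C̄| = |R̄|. Suppose there exists a bijection σ : C̄ → R̄ such that 𝕋 c (σ c) ≠ 0 for every c ∈ C̄ (a maximum matching of size |C̄| in the bipartite graph of nonzero generic entries), while b(R̄→C̄) < |C̄|. Then the family of nonzero entries of the submatrix of 𝕋 with rows C̄ and columns R̄, namely (𝕋 c r) indexed by the pairs (c,r) ∈ C̄ × R̄ with 𝕋 c r ≠ 0, is not algebraically independent over ℝ. -/

import Mathlib

open Matrix

/-- A directed path in the graph with edge set `E`: a nonempty list of pairwise distinct
vertices in which every pair of consecutive vertices is an edge. A single vertex is a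
path of length `0`. -/
def IsDiPath {V : Type*} (E : Finset (V × V)) (l : List V) : Prop :=
  l ≠ [] ∧ l.Nodup ∧ l.Chain' (fun a b => (a, b) ∈ E)

/-- A directed path starting at a vertex of `R` and ending at a vertex of `C`. -/
def IsDiPathFromTo {V : Type*} (E : Finset (V × V)) (R C : Finset V) (l : List V) : Prop :=
  IsDiPath E l ∧ (∃ r ∈ R, l.head? = some r) ∧ (∃ c ∈ C, l.getLast? = some c)

/-- There exist `n` pairwise vertex-disjoint directed paths from `R` to `C`. -/
def HasDisjointPaths {V : Type*} (E : Finset (V × V)) (R C : Finset V) (n : ℕ) : Prop :=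
  ∃ f : Fin n → List V, (∀ k, IsDiPathFromTo E R C (f k)) ∧
    ∀ k l : Fin n, k ≠ l → ∀ v : V, v ∈ f k → v ∉ f l

/-- `b(R→C)`: the maximum number of pairwise vertex-disjoint directed paths from `R`
to `C`. -/
noncomputable def maxDisjointPaths {V : Type*} (E : Finset (V × V)) (R C : Finset V) : ℕ :=
  sSup {n : ℕ | HasDisjointPaths E R C n}

/-- The generic network matrix `𝔾` over the fraction field of `ℝ[Xₑ : e ∈ E]`:
`𝔾 j i = X (i,j)` if `(i,j) ∈ E`, and `0` otherwise. -/
noncomputable def genG {V : Type*} [Fintype V] [DecidableEq V] (E : Finset (V × V)) :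
    Matrix V V (FractionRing (MvPolynomial {e : V × V // e ∈ E} ℝ)) :=
  Matrix.of fun j i =>
    if h : (i, j) ∈ E then
      algebraMap (MvPolynomial {e : V × V // e ∈ E} ℝ) _ (MvPolynomial.X ⟨(i, j), h⟩)
    else 0

/-- The generic response matrix `𝕋 = (I - 𝔾)⁻¹`. -/
noncomputable def genT {V : Type*} [Fintype V] [DecidableEq V] (E : Finset (V × V)) :
    Matrix V V (FractionRing (MvPolynomial {e : V × V // e ∈ E} ℝ)) :=
  (1 - genG E)⁻¹

set_option linter.unusedSectionVars false

section Paths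

variable {V : Type*} [Fintype V] [DecidableEq V]

/-- Iterate a step function starting at `r`, stopping when in `Cb`. -/
def gseq (Cb Rb : Finset V) (s : {v : V // v ∉ Cb} → {v : V // v ∉ Rb}) (r : V) : ℕ → V
  | 0 => r
  | k + 1 =>
    if h : gseq Cb Rb s r k ∈ Cb then gseq Cb Rb s r k else (s ⟨gseq Cb Rb s r k, h⟩).val

lemma gseq_succ {Cb Rb : Finset V} {s : {v : V // v ∉ Cb} → {v : V // v ∉ Rb}} {r : V} {k : ℕ}
    (h : gseq Cb Rb s r k ∉ Cb) :
    gseq Cb Rb s r (k + 1) = (s ⟨gseq Cb Rb s r k, h⟩).val := by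
  simp [gseq, h]

lemma gseq_inj {Cb Rb : Finset V} {s : {v : V // v ∉ Cb} → {v : V // v ∉ Rb}}
    (hs : Function.Injective s) {r r' : V} (hr : r ∈ Rb) (hr' : r' ∈ Rb) :
    ∀ a b : ℕ, (∀ j < a, gseq Cb Rb s r j ∉ Cb) → (∀ j < b, gseq Cb Rb s r' j ∉ Cb) →
      gseq Cb Rb s r a = gseq Cb Rb s r' b → a = b ∧ r = r' := by
  intro a
  induction a with
  | zero =>
    intro b ha hb heq
    cases b with
    | zero => exact ⟨rfl, heq⟩
    | succ m =>
      exfalso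
      rw [gseq_succ (hb m (Nat.lt_succ_self m))] at heq
      exact (s ⟨gseq Cb Rb s r' m, hb m (Nat.lt_succ_self m)⟩).2 (heq ▸ hr)
  | succ n ih =>
    intro b ha hb heq
    cases b with
    | zero =>
      exfalso
      rw [gseq_succ (ha n (Nat.lt_succ_self n))] at heq
      exact (s ⟨gseq Cb Rb s r n, ha n (Nat.lt_succ_self n)⟩).2 (heq ▸ hr')
    | succ m =>
      rw [gseq_succ (ha n (Nat.lt_succ_self n)), gseq_succ (hb m (Nat.lt_succ_self m))] at heq
      have := hs (Subtype.ext heq)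
      have heq' : gseq Cb Rb s r n = gseq Cb Rb s r' m := congrArg Subtype.val this
      obtain ⟨h1, h2⟩ := ih m (fun j hj => ha j (hj.trans (Nat.lt_succ_self n)))
        (fun j hj => hb j (hj.trans (Nat.lt_succ_self m))) heq'
      exact ⟨by omega, h2⟩

lemma gseq_reach {Cb Rb : Finset V} {s : {v : V // v ∉ Cb} → {v : V // v ∉ Rb}}
    (hs : Function.Injective s) {r : V} (hr : r ∈ Rb) :
    ∃ k, gseq Cb Rb s r k ∈ Cb := by
  by_contra h
  push_neg at h
  obtain ⟨x, y, hxy, hfxy⟩ :=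
    Finite.exists_ne_map_eq_of_infinite (fun k : ℕ => gseq Cb Rb s r k)
  exact hxy (gseq_inj hs hr hr x y (fun j _ => h j) (fun j _ => h j) hfxy).1

lemma hasDisjointPaths_of_step (E : Finset (V × V)) (Cb Rb : Finset V)
    (s : {v : V // v ∉ Cb} → {v : V // v ∉ Rb}) (hs : Function.Injective s)
    (hedge : ∀ w, (s w).val = w.val ∨ (w.val, (s w).val) ∈ E) :
    HasDisjointPaths E Rb Cb Rb.card := by
  classical
  set g : {r : V // r ∈ Rb} → ℕ → V := fun r => gseq Cb Rb s r.1 with hg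
  have hreach : ∀ r : {r : V // r ∈ Rb}, ∃ k, g r k ∈ Cb := fun r => gseq_reach hs r.2
  set N : {r : V // r ∈ Rb} → ℕ := fun r => Nat.find (hreach r) with hN
  have hwin : ∀ (r : {r : V // r ∈ Rb}) (a : ℕ), a ≤ N r → ∀ j < a, g r j ∉ Cb := by
    intro r a ha j hj
    exact Nat.find_min (hreach r) (lt_of_lt_of_le hj ha)
  set L : {r : V // r ∈ Rb} → List V := fun r => (List.range (N r + 1)).map (g r) with hL
  have hmem : ∀ (r : {r : V // r ∈ Rb}) (v : V), v ∈ L r ↔ ∃ a ≤ N r, g r a = v := by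
    intro r v
    simp [hL, List.mem_map, List.mem_range, Nat.lt_succ_iff]
  have hkey : ∀ (r r' : {r : V // r ∈ Rb}) (a b : ℕ), a ≤ N r → b ≤ N r' →
      g r a = g r' b → a = b ∧ r = r' := by
    intro r r' a b ha hb heq
    obtain ⟨h1, h2⟩ := gseq_inj hs r.2 r'.2 a b (hwin r a ha) (hwin r' b hb) heq
    exact ⟨h1, Subtype.ext h2⟩
  refine ⟨fun k => L (Rb.equivFin.symm k), ?_, ?_⟩
  · intro k
    set r := Rb.equivFin.symm k with hrdef
    refine ⟨⟨?_, ?_, ?_⟩, ?_, ?_⟩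
    · simp [hL]
    · refine List.Nodup.map_on ?_ List.nodup_range
      intro x hx y hy hxy
      rw [List.mem_range, Nat.lt_succ_iff] at hx hy
      exact (hkey r r x y hx hy hxy).1
    · rw [hL]
      unfold List.Chain'
      rw [List.isChain_map]
      rw [List.isChain_range_succ]
      intro m hm
      have hmC : g r m ∉ Cb := hwin r (N r) le_rfl m hm
      have hstep := gseq_succ (r := r.1) hmC
      rcases hedge ⟨g r m, hmC⟩ with h | h
      · exfalso
        have heq : g r (m + 1) = g r m := hstep.trans h
        have := (hkey r r (m + 1) m hm hm.le heq).1
        omega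
      · have e : g r (m + 1) = (s ⟨g r m, hmC⟩).val := hstep
        rw [e]
        exact h
    · refine ⟨r.1, r.2, ?_⟩
      rw [hL]
      simp only [List.range_succ_eq_map, List.map_cons, List.head?_cons]
      rfl
    · refine ⟨g r (N r), Nat.find_spec (hreach r), ?_⟩
      rw [hL]
      simp [List.range_succ, List.getLast?_map]
      rfl
  · intro k l hkl v hvk hvl
    obtain ⟨a, ha, hga⟩ := (hmem _ v).1 hvk
    obtain ⟨b, hb, hgb⟩ := (hmem _ v).1 hvl
    have := (hkey _ _ a b ha hb (hga.trans hgb.symm)).2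
    exact hkl (Rb.equivFin.symm.injective this)

lemma hasDisjointPaths_card_le {E : Finset (V × V)} {R C : Finset V} {n : ℕ}
    (h : HasDisjointPaths E R C n) : n ≤ Fintype.card V := by
  obtain ⟨f, hf, hdisj⟩ := h
  have hne : ∀ k, f k ≠ [] := fun k => (hf k).1.1
  have : Function.Injective (fun k => (f k).head (hne k)) := by
    intro k l hkl
    by_contra hne'
    have h1 : (f k).head (hne k) ∈ f k := List.head_mem _
    have h2 : (f l).head (hne l) ∈ f l := List.head_mem _
    rw [show (f k).head (hne k) = (f l).head (hne l) from hkl] at h1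
    exact hdisj k l hne' _ h1 h2
  simpa using Fintype.card_le_of_injective _ this

lemma le_maxDisjointPaths {E : Finset (V × V)} {R C : Finset V} {n : ℕ}
    (h : HasDisjointPaths E R C n) : n ≤ maxDisjointPaths E R C :=
  le_csSup ⟨Fintype.card V, fun _ hm => hasDisjointPaths_card_le hm⟩ h

end Paths

section JacobiBlock

lemma det_mul_det_toBlocks₁₁ {n m K : Type*} [Fintype n] [Fintype m] [DecidableEq n]
    [DecidableEq m] [CommRing K] (B : Matrix (n ⊕ m) (n ⊕ m) K) (hB : B * B⁻¹ = 1) :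
    B.det * (B⁻¹.toBlocks₁₁).det = (B.toBlocks₂₂).det := by
  set P := B.toBlocks₁₁ with hP
  set Q := B.toBlocks₁₂ with hQ
  set S := B.toBlocks₂₁ with hS
  set T := B.toBlocks₂₂ with hT
  set X := B⁻¹.toBlocks₁₁ with hX
  set Y := B⁻¹.toBlocks₁₂ with hY
  set Z := B⁻¹.toBlocks₂₁ with hZ
  set W := B⁻¹.toBlocks₂₂ with hW
  have hBb : B = fromBlocks P Q S T := (fromBlocks_toBlocks B).symm
  have hBi : B⁻¹ = fromBlocks X Y Z W := (fromBlocks_toBlocks _).symm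
  have hmul : fromBlocks P Q S T * fromBlocks X Y Z W = fromBlocks 1 0 0 1 := by
    rw [← hBb, ← hBi, fromBlocks_one]; exact hB
  rw [fromBlocks_multiply] at hmul
  have h11 : P * X + Q * Z = 1 := by
    have h := congrArg Matrix.toBlocks₁₁ hmul
    rwa [Matrix.toBlocks_fromBlocks₁₁, Matrix.toBlocks_fromBlocks₁₁] at h
  have h21 : S * X + T * Z = 0 := by
    have h := congrArg Matrix.toBlocks₂₁ hmul
    rwa [Matrix.toBlocks_fromBlocks₂₁, Matrix.toBlocks_fromBlocks₂₁] at h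
  have key : B * fromBlocks X 0 Z 1 = fromBlocks 1 Q 0 T := by
    rw [hBb, fromBlocks_multiply]
    rw [h11, h21]
    simp
  have hdet := congrArg Matrix.det key
  rw [det_mul, det_fromBlocks_zero₁₂, det_fromBlocks_zero₂₁] at hdet
  simpa using hdet

end JacobiBlock

section DetNe

variable {V : Type*} [Fintype V] [DecidableEq V]

lemma det_one_sub_genG_ne_zero (E : Finset (V × V)) : (1 - genG E).det ≠ 0 := by
  classical
  set Rg := MvPolynomial {e : V × V // e ∈ E} ℝ with hRg
  set A₀ : Matrix V V Rg :=
    1 - Matrix.of (fun j i => if h : (i, j) ∈ E then MvPolynomial.X ⟨(i, j), h⟩ else 0) with hA₀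
  have hmap : (1 - genG E) = ((algebraMap Rg (FractionRing Rg)) : Rg →+* _).mapMatrix A₀ := by
    ext j i
    simp only [hA₀, genG, RingHom.mapMatrix_apply, Matrix.map_apply, Matrix.sub_apply,
      Matrix.one_apply, Matrix.of_apply]
    split_ifs <;> simp <;> rfl
  have hA₀det : A₀.det ≠ 0 := by
    intro h
    have h2 := congrArg (MvPolynomial.constantCoeff (σ := {e : V × V // e ∈ E}) (R := ℝ)) h
    rw [RingHom.map_det] at h2
    have h3 : (MvPolynomial.constantCoeff (σ := {e : V × V // e ∈ E}) (R := ℝ)).mapMatrix A₀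
        = (1 : Matrix V V ℝ) := by
      ext j i
      simp only [hA₀, RingHom.mapMatrix_apply, Matrix.map_apply, Matrix.sub_apply,
        Matrix.one_apply, Matrix.of_apply]
      split_ifs <;> simp
    rw [h3] at h2
    simp at h2
  rw [hmap, ← RingHom.map_det]
  intro h
  exact hA₀det (IsFractionRing.injective Rg (FractionRing Rg) (by rw [map_zero]; exact h))

end DetNe

/-- If the bipartite graph of nonzero generic entries between `C̄` and `R̄` has a perfect
matching (a bijection `σ` with `𝕋 c (σ c) ≠ 0` for all `c ∈ C̄`), but `b(R̄→C̄) < |C̄|`,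
then the nonzero entries of the submatrix `𝕋_{C̄,R̄}` are algebraically dependent over
`ℝ`. -/
theorem stmt_13 {V : Type*} [Fintype V] [DecidableEq V]
    (E : Finset (V × V)) (hloop : ∀ i : V, (i, i) ∉ E)
    (Cb Rb : Finset V) (hcard : Cb.card = Rb.card)
    (σ : {c : V // c ∈ Cb} ≃ {r : V // r ∈ Rb})
    (hσ : ∀ c : {c : V // c ∈ Cb}, genT E c.1 (σ c).1 ≠ 0)
    (hb : maxDisjointPaths E Rb Cb < Cb.card) :
    ¬ AlgebraicIndependent ℝ
        (fun p : {p : {c : V // c ∈ Cb} × {r : V // r ∈ Rb} // genT E p.1.1 p.2.1 ≠ 0} =>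
          genT E p.1.1.1 p.1.2.1) := by
  classical
  intro hind
  set K := FractionRing (MvPolynomial {e : V × V // e ∈ E} ℝ) with hK
  set A : Matrix V V K := 1 - genG E with hA
  have hgenT : genT E = A⁻¹ := rfl
  have hdetA : A.det ≠ 0 := det_one_sub_genG_ne_zero E
  have hAunit : IsUnit A.det := isUnit_iff_ne_zero.mpr hdetA
  have hcards : Fintype.card {v : V // v ∉ Rb} = Fintype.card {v : V // v ∉ Cb} := by
    have h1 : Fintype.card {v : V // v ∈ Rb} = Rb.card := Fintype.card_coe Rb
    have h2 : Fintype.card {v : V // v ∈ Cb} = Cb.card := Fintype.card_coe Cb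
    rw [Fintype.card_subtype_compl, Fintype.card_subtype_compl, h1, h2, hcard]
  set τ : {v : V // v ∉ Rb} ≃ {v : V // v ∉ Cb} := Fintype.equivOfCardEq hcards with hτ
  set eRow : ({c : V // c ∈ Cb} ⊕ {v : V // v ∉ Cb}) ≃ V :=
    (Equiv.sumCongr σ τ.symm).trans (Equiv.sumCompl (· ∈ Rb)) with heRow
  set eCol : ({c : V // c ∈ Cb} ⊕ {v : V // v ∉ Cb}) ≃ V := Equiv.sumCompl (· ∈ Cb) with heCol
  set B : Matrix ({c : V // c ∈ Cb} ⊕ {v : V // v ∉ Cb})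
      ({c : V // c ∈ Cb} ⊕ {v : V // v ∉ Cb}) K := A.submatrix eRow eCol with hB
  have hBinv : B * (A⁻¹.submatrix eCol eRow) = 1 := by
    rw [hB, Matrix.submatrix_mul_equiv A A⁻¹ eRow eCol eRow, Matrix.mul_nonsing_inv A hAunit,
      Matrix.submatrix_one_equiv]
  have hBunit : IsUnit B.det := Matrix.isUnit_det_of_right_inverse hBinv
  have hBi : B⁻¹ = A⁻¹.submatrix eCol eRow := Matrix.inv_eq_right_inv hBinv
  have jac := det_mul_det_toBlocks₁₁ B (Matrix.mul_nonsing_inv B hBunit)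
  have hT0 : (B.toBlocks₂₂).det = 0 := by
    by_contra hT
    have hex : ∃ π : Equiv.Perm {v : V // v ∉ Cb}, ∏ w, B.toBlocks₂₂ (π w) w ≠ 0 := by
      by_contra hall
      push_neg at hall
      apply hT
      rw [Matrix.det_apply]
      exact Finset.sum_eq_zero fun π _ => by rw [hall π]; simp
    obtain ⟨π, hπ⟩ := hex
    have hent : ∀ w, B.toBlocks₂₂ (π w) w ≠ 0 :=
      fun w => Finset.prod_ne_zero_iff.mp hπ w (Finset.mem_univ w)
    set s : {v : V // v ∉ Cb} → {v : V // v ∉ Rb} := fun w => τ.symm (π w) with hsdef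
    have hsinj : Function.Injective s := τ.symm.injective.comp π.injective
    have hedge : ∀ w, (s w).val = w.val ∨ (w.val, (s w).val) ∈ E := by
      intro w
      by_contra hcon
      push_neg at hcon
      apply hent w
      have h1 : B.toBlocks₂₂ (π w) w = A ((s w).val) (w.val) := by
        simp [hB, Matrix.toBlocks₂₂, heRow, heCol, hsdef]
      rw [h1, hA]
      simp only [Matrix.sub_apply, Matrix.one_apply, genG, Matrix.of_apply]
      rw [if_neg hcon.1, dif_neg hcon.2, sub_zero]
    have hle := le_maxDisjointPaths (hasDisjointPaths_of_step E Cb Rb s hsinj hedge)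
    rw [hcard] at hb
    omega
  have hXdet : (B⁻¹.toBlocks₁₁).det = 0 := by
    rcases mul_eq_zero.mp (jac.trans hT0) with h | h
    · exact absurd h hBunit.ne_zero
    · exact h
  set ι := {p : {c : V // c ∈ Cb} × {r : V // r ∈ Rb} // genT E p.1.1 p.2.1 ≠ 0} with hι
  set x : ι → K := fun p => genT E p.1.1.1 p.1.2.1 with hx
  set M : Matrix {c : V // c ∈ Cb} {c : V // c ∈ Cb} (MvPolynomial ι ℝ) :=
    Matrix.of fun c c' =>
      if h : genT E c.1 (σ c').1 ≠ 0 then MvPolynomial.X (⟨(c, σ c'), h⟩ : ι) else 0 with hM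
  have hmapM : (((MvPolynomial.aeval x : MvPolynomial ι ℝ →ₐ[ℝ] K)) :
      MvPolynomial ι ℝ →+* K).mapMatrix M = B⁻¹.toBlocks₁₁ := by
    ext c c'
    have hentry : B⁻¹.toBlocks₁₁ c c' = genT E c.1 (σ c').1 := by
      simp [hBi, Matrix.toBlocks₁₁, heRow, heCol, hgenT]
    rw [hentry]
    by_cases h : genT E c.1 (σ c').1 ≠ 0
    · simp [hM, h, hx]
    · push_neg at h
      simp [hM, h]
  have haevaldet : MvPolynomial.aeval x M.det = 0 := by
    have h := RingHom.map_det (((MvPolynomial.aeval x : MvPolynomial ι ℝ →ₐ[ℝ] K)) :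
      MvPolynomial ι ℝ →+* K) M
    rw [hmapM, hXdet] at h
    exact h
  have hMdet : M.det ≠ 0 := by
    intro h0
    set ev : ι → ℝ := fun p => if p.1.2 = σ p.1.1 then (1 : ℝ) else 0 with hev
    have h2 := congrArg (MvPolynomial.aeval (R := ℝ) ev) h0
    rw [map_zero] at h2
    have h3 := RingHom.map_det (((MvPolynomial.aeval ev : MvPolynomial ι ℝ →ₐ[ℝ] ℝ)) :
      MvPolynomial ι ℝ →+* ℝ) M
    have h4 : (((MvPolynomial.aeval ev : MvPolynomial ι ℝ →ₐ[ℝ] ℝ)) :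
        MvPolynomial ι ℝ →+* ℝ).mapMatrix M = (1 : Matrix _ _ ℝ) := by
      ext c c'
      by_cases h : c = c'
      · subst h
        simp [hM, hσ c, Matrix.one_apply, hev]
      · have hσne : ¬ (σ c' : {r : V // r ∈ Rb}) = σ c := fun hh => h (σ.injective hh).symm
        by_cases h5 : genT E c.1 (σ c').1 ≠ 0
        · simp [hM, h5, Matrix.one_apply, hev, hσne, h]
        · push_neg at h5
          simp [hM, h5, Matrix.one_apply, h]
      
    rw [h4, det_one] at h3
    exact one_ne_zero (α := ℝ) (h2.symm.trans h3).symm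
  have hinj : Function.Injective ⇑(MvPolynomial.aeval (R := ℝ) x) := hind
  exact hMdet (hinj (by rw [map_zero]; exact haevaldet))
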